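/- Let k be a commutative ring and let K ⊆ L be fields that are k-algebras, with L a finite-dimensional K-vector space. If δ is a k-linear derivation of L with δ(K) ⊆ K, then the field trace commutes with δ: Tr_{L/K}(δ(x)) = δ(Tr_{L/K}(x)) for all x ∈ L. -/
import Mathlib


/-- If `K ⊆ L` are fields that are `k`-algebras with `L/K` finite, and `δ` is a `k`-linear
derivation of `L` with `δ(K) ⊆ K`, then the field trace `Tr_{L/K}` commutes with `δ`. -/
theorem fieldTrace_comm_derivation {k K L : Type*} [CommRing k]
    [Field K] [Field L] [Algebra k K] [Algebra k L]
    [Algebra K L] [IsScalarTower k K L] [FiniteDimensional K L]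
    (δ : L →ₗ[k] L) (hδ : ∀ x y : L, δ (x * y) = δ x * y + x * δ y)
    (hδK : ∀ a : K, ∃ b : K, δ (algebraMap K L a) = algebraMap K L b)
    (x : L) :
    algebraMap K L (Algebra.trace K L (δ x)) = δ (algebraMap K L (Algebra.trace K L x)) := by
  classical
  choose δ' hδ' using hδK
  set b := Module.finBasis K L with hb
  set M := Algebra.leftMulMatrix b x with hM
  set Δ : Matrix (Fin (Module.finrank K L)) (Fin (Module.finrank K L)) K :=
    Matrix.of fun i j => b.repr (δ (b j)) i with hΔ
  have hsmul : ∀ (a : K) (y : L), a • y = algebraMap K L a * y := fun a y => Algebra.smul_def a y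
  have hdbm : ∀ m, δ (b m) = ∑ i, Δ i m • b i := by
    intro m
    conv_lhs => rw [← Module.Basis.sum_repr b (δ (b m))]
    rfl
  have hxbj : ∀ j, x * b j = ∑ m, M m j • b m := by
    intro j
    conv_lhs => rw [← Module.Basis.sum_repr b (x * b j)]
    refine Finset.sum_congr rfl fun m _ => ?_
    rw [hM, Algebra.leftMulMatrix_eq_repr_mul]
  have key : Algebra.leftMulMatrix b (δ x) = M.map δ' + Δ * M - M * Δ := by
    ext i j
    rw [Algebra.leftMulMatrix_eq_repr_mul]
    have hstep : δ x * b j = δ (x * b j) - x * δ (b j) := by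
      rw [hδ x (b j)]; ring
    have h1 : δ (x * b j) = ∑ m, (δ' (M m j) • b m + M m j • δ (b m)) := by
      rw [hxbj j, map_sum]
      refine Finset.sum_congr rfl fun m _ => ?_
      rw [hsmul, hδ, hδ' (M m j), ← hsmul, ← hsmul]
    have h2 : x * δ (b j) = ∑ l, Δ l j • (x * b l) := by
      rw [hdbm j, Finset.mul_sum]
      refine Finset.sum_congr rfl fun l _ => ?_
      rw [hsmul, hsmul]; ring
    rw [hstep, map_sub, h1, h2, map_sum, map_sum]
    simp only [map_add, map_smul, Finsupp.coe_add, Finsupp.coe_smul, Pi.add_apply,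
      Pi.smul_apply, Finset.sum_apply, Finsupp.coe_sub, Pi.sub_apply]
    have e1 : ∀ m, (b.repr (b m)) i = if m = i then 1 else 0 := by
      intro m; rw [b.repr_self]; exact Finsupp.single_apply
    have e2 : ∀ m, (b.repr (δ (b m))) i = Δ i m := fun m => rfl
    have e3 : ∀ l, (b.repr (x * b l)) i = M i l := by
      intro l; rw [hM, Algebra.leftMulMatrix_eq_repr_mul]
    simp only [Finset.sum_apply', Finsupp.add_apply, Finsupp.smul_apply, e1, e2, e3,
      smul_eq_mul, mul_ite, mul_one, mul_zero]
    rw [Finset.sum_add_distrib, Finset.sum_ite_eq' Finset.univ i (fun m => δ' (M m j))]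
    simp [Matrix.mul_apply, Matrix.map_apply, mul_comm]
  have htr : Algebra.trace K L (δ x) = ∑ i, δ' (M i i) := by
    rw [Algebra.trace_eq_matrix_trace b, key, Matrix.trace_sub, Matrix.trace_add,
      Matrix.trace_mul_comm Δ M, add_sub_cancel_right]
    simp [Matrix.trace, Matrix.diag, Matrix.map_apply]
  have htr2 : Algebra.trace K L x = ∑ i, M i i := by
    rw [Algebra.trace_eq_matrix_trace b]; rfl
  rw [htr, htr2, map_sum, map_sum, map_sum]
  exact Finset.sum_congr rfl fun i _ => (hδ' (M i i)).symm
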